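/- Let H(x) be the formal power series ((1-8x)^{3/2} - 8x² + 20x + 1) / (2(1+x)³) over ℚ, where (1-8x)^{3/2} is the formal binomial series. Then for n ≥ 1, the coefficient of x^n in H(x) equals ((7n²-3n-2)/2)·(-1)^{n-1} + 3·Σ_{i=2}^{n} 2^{i+1} · (2i-4)!/(i!(i-2)!) · C(n-i+2,2) · (-1)^{n-i}. -/

import Mathlib

open PowerSeries Finset

/-- The generalized binomial coefficient `C(r, k)` for a rational `r`. -/
def qchoose (r : ℚ) (k : ℕ) : ℚ :=
  (∏ i ∈ Finset.range k, (r - i)) / Nat.factorial k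

/-- The formal power series `(1 - 8x)^{3/2} = Σ_k C(3/2, k) (-8)^k x^k`. -/
def oneSub8XPow32 : PowerSeries ℚ :=
  PowerSeries.mk fun k => qchoose (3 / 2) k * (-8) ^ k

noncomputable section
namespace MyAux

def A (i : ℕ) : ℚ :=
  2 ^ (i + 1) * (Nat.factorial (2 * i - 4) : ℚ) / (Nat.factorial i * Nat.factorial (i - 2))

lemma chooseTwo (m : ℕ) : ((m+2).choose 2 : ℚ) = (m+1)*(m+2)/2 := by
  induction m with
  | zero => norm_num
  | succ m ih =>
    have h : (m+3).choose 2 = (m+2).choose 1 + (m+2).choose 2 := Nat.choose_succ_succ _ _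
    rw [show m+1+2 = m+3 from rfl, h]
    push_cast [Nat.choose_one_right, ih]
    ring

lemma A_ratio (k : ℕ) : A (k+3) * (k+3) = A (k+2) * (8*k+4) := by
  have h1 : 2*(k+3)-4 = (2*k+1)+1 := by omega
  have h2 : 2*(k+2)-4 = 2*k := by omega
  have h3 : (k+3)-2 = k+1 := by omega
  have h4 : (k+2)-2 = k := by omega
  rw [A, A, h1, h2, h3, h4]
  rw [Nat.factorial_succ, show 2*k+1 = (2*k)+1 from rfl, Nat.factorial_succ,
    Nat.factorial_succ (k+2), Nat.factorial_succ (k+1), Nat.factorial_succ (k)]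
  have hf : ((2*k).factorial : ℚ) ≠ 0 := by exact_mod_cast (Nat.factorial_pos _).ne'
  have hk : ((k).factorial : ℚ) ≠ 0 := by exact_mod_cast (Nat.factorial_pos _).ne'
  push_cast
  field_simp
  ring

lemma qchoose_succ (r : ℚ) (k : ℕ) :
    qchoose r (k+1) = qchoose r k * (r - k) / (k+1) := by
  rw [qchoose, qchoose, Finset.prod_range_succ, Nat.factorial_succ]
  have hf : ((k).factorial : ℚ) ≠ 0 := by exact_mod_cast (Nat.factorial_pos _).ne'
  have hk : ((k:ℚ)+1) ≠ 0 := by positivity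
  push_cast
  field_simp

lemma qA (k : ℕ) : qchoose (3/2) (k+2) * (-8)^(k+2) = 6 * A (k+2) := by
  induction k with
  | zero =>
    rw [qchoose]
    simp [Finset.prod_range_succ, A, Nat.factorial]
    norm_num
  | succ k ih =>
    have hk : ((k:ℚ)+3) ≠ 0 := by positivity
    have hr : A (k+3) = A (k+2) * (8*k+4) / ((k:ℚ)+3) := by
      rw [eq_div_iff hk]; exact A_ratio k
    rw [show k+1+2 = (k+2)+1 from rfl, qchoose_succ, pow_succ, hr]
    push_cast
    linear_combination ((-8) * (3/2 - ((k:ℚ)+2)) / ((k:ℚ)+3)) * ih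

end MyAux

namespace MyAux

def T (n i : ℕ) : ℚ := A i * (((n - i) + 2).choose 2 : ℚ) * (-1) ^ (n - i)

def F (n : ℕ) : ℚ :=
  ((7 * (n : ℚ) ^ 2 - 3 * n - 2) / 2) * (-1) ^ (n - 1) +
    3 * ∑ i ∈ Finset.Icc 2 n, T n i

lemma icc_to_range (n : ℕ) (hn : 1 ≤ n) :
    (∑ i ∈ Finset.Icc 2 n, T n i) = ∑ t ∈ Finset.range (n-1), T n (2+t) := by
  rw [← Finset.Ico_add_one_right_eq_Icc, Finset.sum_Ico_eq_sum_range]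
  congr 1

lemma key (k : ℕ) :
    F (k+4) + 3 * F (k+3) + 3 * F (k+2) + F (k+1) = 3 * A (k+4) := by
  have e4 : (∑ i ∈ Finset.Icc 2 (k+4), T (k+4) i)
      = (∑ t ∈ Finset.range k, T (k+4) (2+t))
        + T (k+4) (2+k) + T (k+4) (2+(k+1)) + T (k+4) (2+(k+2)) := by
    rw [icc_to_range _ (by omega), show k+4-1 = k+2+1 by omega, Finset.sum_range_succ,
      Finset.sum_range_succ, Finset.sum_range_succ]
  have e3 : (∑ i ∈ Finset.Icc 2 (k+3), T (k+3) i)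
      = (∑ t ∈ Finset.range k, T (k+3) (2+t)) + T (k+3) (2+k) + T (k+3) (2+(k+1)) := by
    rw [icc_to_range _ (by omega), show k+3-1 = k+1+1 by omega, Finset.sum_range_succ,
      Finset.sum_range_succ]
  have e2 : (∑ i ∈ Finset.Icc 2 (k+2), T (k+2) i)
      = (∑ t ∈ Finset.range k, T (k+2) (2+t)) + T (k+2) (2+k) := by
    rw [icc_to_range _ (by omega), show k+2-1 = k+1 by omega, Finset.sum_range_succ]
  have e1 : (∑ i ∈ Finset.Icc 2 (k+1), T (k+1) i)
      = ∑ t ∈ Finset.range k, T (k+1) (2+t) := by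
    rw [icc_to_range _ (by omega), show k+1-1 = k by omega]
  -- boundary values
  have b1 : T (k+4) (2+k) = 6 * A (k+2) := by
    rw [T, show k+4-(2+k) = 2 by omega, show 2+k = k+2 by omega]
    norm_num [show Nat.choose 4 2 = 6 from rfl]
    try ring
  have b2 : T (k+4) (2+(k+1)) = -3 * A (k+3) := by
    rw [T, show k+4-(2+(k+1)) = 1 by omega, show 2+(k+1) = k+3 by omega]
    norm_num [show Nat.choose 3 2 = 3 from rfl]
    try ring
  have b3 : T (k+4) (2+(k+2)) = A (k+4) := by
    rw [T, show k+4-(2+(k+2)) = 0 by omega, show 2+(k+2) = k+4 by omega]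
    norm_num [show Nat.choose 2 2 = 1 from rfl]
    try ring
  have b4 : T (k+3) (2+k) = -3 * A (k+2) := by
    rw [T, show k+3-(2+k) = 1 by omega, show 2+k = k+2 by omega]
    norm_num [show Nat.choose 3 2 = 3 from rfl]
    try ring
  have b5 : T (k+3) (2+(k+1)) = A (k+3) := by
    rw [T, show k+3-(2+(k+1)) = 0 by omega, show 2+(k+1) = k+3 by omega]
    norm_num [show Nat.choose 2 2 = 1 from rfl]
    try ring
  have b6 : T (k+2) (2+k) = A (k+2) := by
    rw [T, show k+2-(2+k) = 0 by omega, show 2+k = k+2 by omega]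
    norm_num [show Nat.choose 2 2 = 1 from rfl]
    try ring
  -- the main cancellation in the range-k sums
  have hsum : (∑ t ∈ Finset.range k, T (k+4) (2+t))
      + 3 * (∑ t ∈ Finset.range k, T (k+3) (2+t))
      + 3 * (∑ t ∈ Finset.range k, T (k+2) (2+t))
      + (∑ t ∈ Finset.range k, T (k+1) (2+t)) = 0 := by
    rw [Finset.mul_sum, Finset.mul_sum, ← Finset.sum_add_distrib, ← Finset.sum_add_distrib,
      ← Finset.sum_add_distrib]
    apply Finset.sum_eq_zero
    intro t ht
    obtain ⟨j, hj⟩ : ∃ j, k = t + 1 + j := ⟨k - t - 1, by have := Finset.mem_range.mp ht; omega⟩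
    subst hj
    rw [T, T, T, T, show t+1+j+4-(2+t) = j+3 by omega, show t+1+j+3-(2+t) = j+2 by omega,
      show t+1+j+2-(2+t) = j+1 by omega, show t+1+j+1-(2+t) = j by omega]
    rw [show j+3+2 = (j+3)+2 from rfl, chooseTwo, show j+2+2 = (j+2)+2 from rfl, chooseTwo,
      show j+1+2 = (j+1)+2 from rfl, chooseTwo, chooseTwo]
    push_cast
    ring
  -- assemble
  rw [F, F, F, F, e4, e3, e2, e1, b1, b2, b3, b4, b5, b6,
    show k+4-1 = k+3 by omega, show k+3-1 = k+2 by omega,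
    show k+2-1 = k+1 by omega, show k+1-1 = k by omega]
  push_cast
  linear_combination 3 * hsum

end MyAux

namespace MyAux

def f (n : ℕ) : ℚ := if n = 0 then 1 else F n

def Hexp : PowerSeries ℚ := PowerSeries.mk f

lemma F1 : F 1 = 1 := by
  rw [F, show Finset.Icc 2 1 = ∅ from rfl]
  norm_num

lemma F2 : F 2 = 2 := by
  rw [F, show Finset.Icc 2 2 = {2} from rfl]
  simp [T, A, Nat.factorial]
  norm_num

lemma F3 : F 3 = 6 := by
  rw [F, show Finset.Icc 2 3 = {2, 3} from rfl]
  rw [Finset.sum_insert (by decide), Finset.sum_singleton]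
  norm_num [T, A, Nat.factorial]

lemma q0 : qchoose (3/2) 0 = 1 := by simp [qchoose]
lemma q1 : qchoose (3/2) 1 = 3/2 := by
  simp [qchoose, Finset.prod_range_one, Nat.factorial]
lemma q2 : qchoose (3/2) 2 = 3/8 := by
  rw [qchoose, Finset.prod_range_succ, Finset.prod_range_one]
  norm_num [Nat.factorial]
lemma q3 : qchoose (3/2) 3 = -1/16 := by
  rw [qchoose, Finset.prod_range_succ, Finset.prod_range_succ, Finset.prod_range_one]
  norm_num [Nat.factorial]

lemma prod_eq : (2 * (1 + X)^3 : PowerSeries ℚ) * Hexp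
    = oneSub8XPow32 - 8 * X^2 + 20 * X + 1 := by
  have expand : (2 * (1 + X)^3 : PowerSeries ℚ) * Hexp
      = C 2 * Hexp + C 6 * (X^1 * Hexp) + C 6 * (X^2 * Hexp) + C 2 * (X^3 * Hexp) := by
    have h2 : (C 2) = (2 : PowerSeries ℚ) := map_ofNat _ 2
    have h6 : (C 6) = (6 : PowerSeries ℚ) := map_ofNat _ 6
    rw [h2, h6]; ring
  have hrhs : (oneSub8XPow32 - 8 * X^2 + 20 * X + 1 : PowerSeries ℚ)
      = oneSub8XPow32 - C 8 * X^2 + C 20 * X + 1 := by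
    rw [map_ofNat C 8, map_ofNat C 20]
  ext m
  rw [expand, hrhs]
  simp only [map_add, map_sub, coeff_C_mul, coeff_X_pow_mul', Hexp, coeff_mk,
    oneSub8XPow32, coeff_X, coeff_one, coeff_X_pow]
  rcases m with _|_|_|_|d
  · norm_num [f, q0]
  · norm_num [f, F1, q1]
  · norm_num [f, F1, F2, q2]
  · norm_num [f, F1, F2, F3, q3]
  · rw [show d+1+1+1+1 = d+4 by omega]
    rw [show d+4-1 = d+3 by omega, show d+4-2 = d+2 by omega, show d+4-3 = d+1 by omega]
    simp only [f, if_neg (show ¬d+4 = 0 by omega), if_neg (show ¬d+3 = 0 by omega),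
      if_neg (show ¬d+2 = 0 by omega), if_neg (show ¬d+1 = 0 by omega),
      if_neg (show ¬d+4 = 2 by omega), if_neg (show ¬d+4 = 1 by omega),
      if_pos (show 1 ≤ d+4 by omega), if_pos (show 2 ≤ d+4 by omega),
      if_pos (show 3 ≤ d+4 by omega)]
    have hq := qA (d+2)
    rw [show d+2+2 = d+4 by omega] at hq
    linear_combination 2 * key d - hq

lemma Hexp_eq (H : PowerSeries ℚ)
    (hH : 2 * (1 + X) ^ 3 * H = oneSub8XPow32 - 8 * X ^ 2 + 20 * X + 1) :
    H = Hexp := by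
  have hne : (2 * (1 + X)^3 : PowerSeries ℚ) ≠ 0 := by
    intro h
    have := congrArg constantCoeff h
    simp [map_ofNat] at this
  exact mul_left_cancel₀ hne (hH.trans prod_eq.symm)

end MyAux
end

/-- If `H(x) = ((1-8x)^{3/2} - 8x² + 20x + 1) / (2(1+x)³)` as a formal power
series over `ℚ`, then for `n ≥ 1` the coefficient of `x^n` in `H` equals
the explicit formula for `S_n(1342)`. -/
theorem coeff_H_eq_formula (H : PowerSeries ℚ)
    (hH : 2 * (1 + PowerSeries.X) ^ 3 * H =
      oneSub8XPow32 - 8 * PowerSeries.X ^ 2 + 20 * PowerSeries.X + 1)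
    (n : ℕ) (hn : 1 ≤ n) :
    PowerSeries.coeff n H =
      ((7 * (n : ℚ) ^ 2 - 3 * n - 2) / 2) * (-1) ^ (n - 1) +
        3 * ∑ i ∈ Finset.Icc 2 n,
          2 ^ (i + 1) * (Nat.factorial (2 * i - 4) : ℚ) /
            (Nat.factorial i * Nat.factorial (i - 2)) *
            (Nat.choose (n - i + 2) 2) * (-1) ^ (n - i) := by
  rw [MyAux.Hexp_eq H hH, MyAux.Hexp, coeff_mk, MyAux.f, if_neg (by omega)]
  simp only [MyAux.F, MyAux.T, MyAux.A]
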